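/- Let Γ be a finite connected cubic girth-regular graph of finite girth g with n vertices and signature (2, 2, 2). Then g divides 3n, and the total number of girth cycles of Γ equals 3n/g. -/

import Mathlib

open SimpleGraph

/-- `s` is the edge set of some cycle of length `g` in `G`. -/
def IsGirthCycleEdgeSet {V : Type*} (G : SimpleGraph V) (g : ℕ) (s : Set (Sym2 V)) : Prop :=
  ∃ (u : V) (w : G.Walk u u), w.IsCycle ∧ w.length = g ∧ s = {e | e ∈ w.edges}

/-- The number of cycles of length `g` in `G` that contain the edge `e`. -/
noncomputable def girthCycleCount {V : Type*} (G : SimpleGraph V) (g : ℕ) (e : Sym2 V) : ℕ :=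
  Set.ncard {s : Set (Sym2 V) | IsGirthCycleEdgeSet G g s ∧ e ∈ s}

/-- The multiset of the numbers of `g`-cycles through the edges incident to `v`. -/
noncomputable def vertexSignature {V : Type*} [Fintype V] (G : SimpleGraph V) (g : ℕ)
    (v : V) : Multiset ℕ :=
  ((G.neighborSet v).toFinite.toFinset.val).map fun u => girthCycleCount G g s(v, u)

/-- If a finite connected cubic girth-regular graph of finite girth `g`
with `n` vertices has signature `(2, 2, 2)`, then `g` divides `3n` and the total number
of girth cycles equals `3n/g`. -/
theorem stmt13 {V : Type*} [Fintype V] (G : SimpleGraph V) [DecidableRel G.Adj]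
    (g : ℕ) (hconn : G.Connected)
    (hreg : G.IsRegularOfDegree 3) (hg : G.egirth = (g : ℕ∞))
    (hsig : ∀ v : V, vertexSignature G g v = {2, 2, 2}) :
    g ∣ 3 * Fintype.card V ∧
      Set.ncard {s : Set (Sym2 V) | IsGirthCycleEdgeSet G g s} = 3 * Fintype.card V / g := by
  classical
  have hg3 : 3 ≤ g := by
    have h := G.three_le_egirth
    rw [hg] at h
    exact_mod_cast h
  set S : Set (Set (Sym2 V)) := {s | IsGirthCycleEdgeSet G g s} with hS
  have hSfin : S.Finite := Set.toFinite _
  set 𝒮 : Finset (Set (Sym2 V)) := hSfin.toFinset with h𝒮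
  -- each girth cycle edge set has g edges, all in G.edgeSet
  have hcard : ∀ s ∈ 𝒮, (s.toFinset.card = g ∧ s.toFinset ⊆ G.edgeFinset) := by
    intro s hs
    rw [h𝒮, Set.Finite.mem_toFinset] at hs
    obtain ⟨u, w, hc, hl, rfl⟩ := hs
    constructor
    · have hse : ({e | e ∈ w.edges} : Set (Sym2 V)) = ↑w.edges.toFinset := by
        ext e; simp
      rw [← Set.ncard_eq_toFinset_card', hse, Set.ncard_coe_finset,
        List.toFinset_card_of_nodup hc.edges_nodup, w.length_edges, hl]
    · intro e he
      simp only [Set.mem_toFinset, Set.mem_setOf_eq] at he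
      rw [mem_edgeFinset]
      exact w.edges_subset_edgeSet he
  -- every edge lies on exactly 2 girth cycles
  have hcount : ∀ e ∈ G.edgeFinset, girthCycleCount G g e = 2 := by
    intro e he
    rw [mem_edgeFinset] at he
    induction e with
    | h v u =>
      have hu : u ∈ (G.neighborSet v).toFinite.toFinset := by
        rw [Set.Finite.mem_toFinset]; exact he
      have hm : girthCycleCount G g s(v, u) ∈ vertexSignature G g v :=
        Multiset.mem_map_of_mem _ hu
      rw [hsig v] at hm
      simpa using hm
  -- express girthCycleCount as a card of a filter
  have hgcc : ∀ e : Sym2 V, girthCycleCount G g e = (𝒮.filter (fun s => e ∈ s)).card := by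
    intro e
    rw [girthCycleCount, ← Set.ncard_coe_finset]
    congr 1
    ext t
    simp [h𝒮, Set.Finite.mem_toFinset, hS, and_comm]
  -- double counting
  have key : 𝒮.card * g = 3 * Fintype.card V := by
    have h1 : ∑ s ∈ 𝒮, s.toFinset.card = 𝒮.card * g := by
      rw [Finset.sum_congr rfl (fun s hs => (hcard s hs).1), Finset.sum_const, smul_eq_mul]
    have h2 : ∑ s ∈ 𝒮, s.toFinset.card
        = ∑ e ∈ G.edgeFinset, (𝒮.filter (fun s => e ∈ s)).card := by
      have : ∀ s ∈ 𝒮, s.toFinset.card = ∑ e ∈ G.edgeFinset, if e ∈ s then 1 else 0 := by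
        intro s hs
        rw [← Finset.card_filter]
        congr 1
        ext e
        simp only [Finset.mem_filter, Set.mem_toFinset]
        exact ⟨fun h => ⟨((hcard s hs).2 (Set.mem_toFinset.2 h)), h⟩,
          fun h => h.2⟩
      rw [Finset.sum_congr rfl this, Finset.sum_comm]
      refine Finset.sum_congr rfl fun e _ => ?_
      rw [← Finset.card_filter]
    have h3 : ∑ e ∈ G.edgeFinset, (𝒮.filter (fun s => e ∈ s)).card = 2 * G.edgeFinset.card := by
      rw [Finset.sum_congr rfl (fun e he => by rw [← hgcc, hcount e he]), Finset.sum_const,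
        smul_eq_mul, mul_comm]
    have h4 : 2 * G.edgeFinset.card = 3 * Fintype.card V := by
      have := G.sum_degrees_eq_twice_card_edges
      rw [Finset.sum_congr rfl (fun v _ => hreg v), Finset.sum_const, smul_eq_mul,
        Finset.card_univ] at this
      omega
    omega
  have hScard : Set.ncard S = 𝒮.card := Set.ncard_eq_toFinset_card S hSfin
  constructor
  · exact ⟨𝒮.card, by rw [← key, mul_comm]⟩
  · rw [hScard, ← key, Nat.mul_div_cancel _ (by omega : 0 < g)]
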